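/- Let w be a nonzero complex number, set U = w², and let κ, κ₂ be complex numbers. Define κ̂₁ = w·κ + κ₂/w and κ̂₂ = w·κ₂. Then |κ̂₁ − (2·Re(U)/|U|²)·κ̂₂|² ≥ |U|·|κ|² + |κ₂|²/|U| − 2·|κ₂|·|κ|. -/

import Mathlib

set_option autoImplicit false

theorem pointwise_estimate_E3
    (w U : ℂ) (hw : w ≠ 0) (hU : U = w ^ 2) (κ κ₂ : ℂ) :
    ‖U‖ * ‖κ‖ ^ 2
      + ‖κ₂‖ ^ 2 / ‖U‖
      - 2 * ‖κ₂‖ * ‖κ‖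
    ≤ ‖(w * κ + κ₂ / w)
        - ((2 * U.re / ‖U‖ ^ 2 : ℝ) : ℂ) * (w * κ₂)‖ ^ 2 := by
  have hUne : U ≠ 0 := by simp [hU, pow_eq_zero_iff, hw]
  have hcw : (starRingEnd ℂ) w ≠ 0 := by simpa using hw
  have hcU : (starRingEnd ℂ) U ≠ 0 := by simpa using hUne
  -- coefficient identity
  have hcoef : ((2 * U.re / ‖U‖ ^ 2 : ℝ) : ℂ)
      = (U + (starRingEnd ℂ) U) / (U * (starRingEnd ℂ) U) := by
    have h1 : ((2 * U.re : ℝ) : ℂ) = U + (starRingEnd ℂ) U := by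
      rw [Complex.add_conj]
    have h2 : ((‖U‖ ^ 2 : ℝ) : ℂ) = U * (starRingEnd ℂ) U := by
      rw [Complex.sq_norm, ← Complex.mul_conj]
    push_cast
    rw [← h1, ← h2]
    push_cast
    ring
  have key : (w * κ + κ₂ / w)
      - ((2 * U.re / ‖U‖ ^ 2 : ℝ) : ℂ) * (w * κ₂)
      = w * κ - w * κ₂ / ((starRingEnd ℂ) w) ^ 2 := by
    rw [hcoef, hU]
    have hcU2 : (starRingEnd ℂ) (w ^ 2) = ((starRingEnd ℂ) w) ^ 2 := map_pow _ _ _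
    rw [hcU2]
    field_simp
    ring
  set A := ‖w * κ‖ with hA
  set B := ‖w * κ₂ / ((starRingEnd ℂ) w) ^ 2‖ with hB
  have habs : |A - B| ≤ ‖(w * κ + κ₂ / w)
      - ((2 * U.re / ‖U‖ ^ 2 : ℝ) : ℂ) * (w * κ₂)‖ := by
    rw [key]
    exact abs_norm_sub_norm_le _ _
  have hsq : (A - B) ^ 2 ≤ ‖(w * κ + κ₂ / w)
      - ((2 * U.re / ‖U‖ ^ 2 : ℝ) : ℂ) * (w * κ₂)‖ ^ 2 := by
    rw [← sq_abs (A - B)]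
    exact pow_le_pow_left₀ (abs_nonneg _) habs 2
  refine le_trans ?_ hsq
  -- compute A, B
  have hs : ‖w‖ ≠ 0 := by simpa using hw
  have hAeq : A = ‖w‖ * ‖κ‖ := by rw [hA, norm_mul]
  have hBeq : B = ‖κ₂‖ / ‖w‖ := by
    rw [hB, norm_div, norm_mul, norm_pow, Complex.norm_conj]
    field_simp
  have hUabs : ‖U‖ = ‖w‖ ^ 2 := by rw [hU, norm_pow]
  rw [hAeq, hBeq, hUabs]
  have hs' : (0:ℝ) < ‖w‖ := (norm_pos_iff.mpr hw)
  field_simp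
  ring_nf
  nlinarith [hs'.le, norm_nonneg κ, norm_nonneg κ₂]
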